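/- For positive integers m, t, r_1 < r_2 < ... < r_l (each r_i ≥ 2) and positive weights α_1,...,α_l, if Σ_{i=1}^l C(t, r_i) ≤ m ≤ Σ_{i=1}^l C(t, r_i) + Σ_{i=1}^l C(t−1, r_i−1), then the weighted Graph-Lagrangian of the colex hypergraph C_{m, {r_1,...,r_l}} equals that of the complete hypergraph [t]^{{r_1,...,r_l}}. -/

import Mathlib

open Finset

/-- Feasible weightings on vertex set ℕ: nonnegative, finitely supported, summing to 1. -/
def simplexNat : Set (ℕ → ℝ) :=
  {x | (∀ i, 0 ≤ x i) ∧ ∃ n : ℕ, (∑ i ∈ Finset.range n, x i) = 1 ∧ ∀ i, n ≤ i → x i = 0}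

/-- Weighted Lagrangian polynomial: edges of cardinality r get weight `α r`. -/
def wLagN (α : ℕ → ℝ) (E : Finset (Finset ℕ)) (x : ℕ → ℝ) : ℝ :=
  ∑ e ∈ E, α e.card * ∏ v ∈ e, x v

/-- A <_colex B : the maximum of the symmetric difference lies in B. -/
def ColexLt (A B : Finset ℕ) : Prop :=
  ∃ k, k ∈ B ∧ k ∉ A ∧ ∀ j, k < j → (j ∈ A ↔ j ∈ B)

/-- `E` consists of the first `|E|` sets with cardinalities in `T` in colex order. -/
def IsColexInitial (T : Finset ℕ) (E : Finset (Finset ℕ)) : Prop :=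
  (∀ e ∈ E, e.card ∈ T) ∧ ∀ A B : Finset ℕ, B ∈ E → A.card ∈ T → ColexLt A B → A ∈ E

lemma colexLt_of_forall_lt {A B : Finset ℕ} (hB : B.Nonempty)
    (h : ∀ a ∈ A, a < B.max' hB) : ColexLt A B := by
  refine ⟨B.max' hB, B.max'_mem hB, fun hA => absurd (h _ hA) (lt_irrefl _), fun j hj => ?_⟩
  constructor
  · intro hA; exact absurd (h j hA) (not_lt.2 hj.le)
  · intro hBj; exact absurd (B.le_max' j hBj) (not_le.2 hj)

lemma card_powerset_filter (s rs : Finset ℕ) :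
    (s.powerset.filter (fun e => e.card ∈ rs)).card = ∑ r ∈ rs, s.card.choose r := by
  classical
  have h : s.powerset.filter (fun e => e.card ∈ rs) = rs.biUnion (fun r => s.powersetCard r) := by
    ext e
    simp only [mem_filter, mem_powerset, mem_biUnion, mem_powersetCard]
    constructor
    · rintro ⟨h1, h2⟩; exact ⟨e.card, h2, h1, rfl⟩
    · rintro ⟨r, hr, h1, rfl⟩; exact ⟨h1, hr⟩
  rw [h, card_biUnion]
  · exact Finset.sum_congr rfl fun r _ => by rw [card_powersetCard]
  · intro x _ y _ hxy
    rw [Function.onFun_apply, Finset.disjoint_left]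
    intro e he1 he2
    rw [mem_powersetCard] at he1 he2
    exact hxy (he1.2.symm.trans he2.2)

lemma card_powerset_filter' (s rs : Finset ℕ) (hrs : ∀ r ∈ rs, 2 ≤ r) :
    (s.powerset.filter (fun e => e.card + 1 ∈ rs)).card = ∑ r ∈ rs, s.card.choose (r - 1) := by
  classical
  have h : s.powerset.filter (fun e => e.card + 1 ∈ rs)
      = rs.biUnion (fun r => s.powersetCard (r - 1)) := by
    ext e
    simp only [mem_filter, mem_powerset, mem_biUnion, mem_powersetCard]
    constructor
    · rintro ⟨h1, h2⟩; exact ⟨e.card + 1, h2, h1, by omega⟩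
    · rintro ⟨r, hr, h1, h2⟩
      have h3 := hrs r hr
      have : e.card + 1 = r := by omega
      exact ⟨h1, this ▸ hr⟩
  rw [h, card_biUnion]
  · exact Finset.sum_congr rfl fun r _ => by rw [card_powersetCard]
  · intro x hx y hy hxy
    rw [Function.onFun_apply, Finset.disjoint_left]
    intro e he1 he2
    rw [mem_powersetCard] at he1 he2
    have := he1.2.symm.trans he2.2
    have hx2 := hrs x hx; have hy2 := hrs y hy
    exact hxy (by omega)

lemma simplex_le_one {x : ℕ → ℝ} (hx : x ∈ simplexNat) (v : ℕ) : x v ≤ 1 := by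
  obtain ⟨hpos, n, hsum, h0⟩ := hx
  by_cases h : v < n
  · calc x v ≤ ∑ i ∈ Finset.range n, x i :=
        Finset.single_le_sum (fun i _ => hpos i) (Finset.mem_range.2 h)
    _ = 1 := hsum
  · rw [h0 v (not_lt.1 h)]; exact zero_le_one

lemma wLagN_le_sum {α : ℕ → ℝ} {E : Finset (Finset ℕ)} (hα : ∀ e ∈ E, 0 ≤ α e.card)
    {x : ℕ → ℝ} (hx : x ∈ simplexNat) : wLagN α E x ≤ ∑ e ∈ E, α e.card := by
  apply Finset.sum_le_sum
  intro e he
  have h1 : ∏ v ∈ e, x v ≤ 1 :=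
    Finset.prod_le_one (fun v _ => hx.1 v) (fun v _ => simplex_le_one hx v)
  calc α e.card * ∏ v ∈ e, x v ≤ α e.card * 1 :=
      mul_le_mul_of_nonneg_left h1 (hα e he)
  _ = α e.card := mul_one _

lemma simplex_nonempty : simplexNat.Nonempty := by
  refine ⟨fun i => if i = 0 then 1 else 0, fun i => by positivity, 1, ?_, ?_⟩
  · simp
  · intro i hi
    have h : i ≠ 0 := by omega
    simp [h]

/-- The complete hypergraph is contained in any colex-initial family of size ≥ ∑ C(t,r). -/
lemma complete_subset_colex {rs : Finset ℕ} {m t : ℕ} {C : Finset (Finset ℕ)}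
    (hm1 : ∑ r ∈ rs, t.choose r ≤ m)
    (hCm : C.card = m) (hC : IsColexInitial rs C) :
    (Finset.range t).powerset.filter (fun e => e.card ∈ rs) ⊆ C := by
  classical
  set K := (Finset.range t).powerset.filter (fun e => e.card ∈ rs) with hK
  by_contra hcon
  obtain ⟨A, hAK, hAC⟩ := not_subset.1 hcon
  have hAsub : A ⊆ range t := mem_powerset.1 (mem_filter.1 hAK).1
  have hAcard : A.card ∈ rs := (mem_filter.1 hAK).2
  have hCsub : C ⊆ K.erase A := by
    intro B hB
    have hBr : B ⊆ range t := by
      by_contra hBr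
      obtain ⟨v, hvB, hvt⟩ := not_subset.1 hBr
      have hvt' : t ≤ v := by simpa using hvt
      have hBne : B.Nonempty := ⟨v, hvB⟩
      have hcolex : ColexLt A B := by
        apply colexLt_of_forall_lt hBne
        intro a ha
        have h1 : a < t := mem_range.1 (hAsub ha)
        have h2 : v ≤ B.max' hBne := B.le_max' v hvB
        omega
      exact hAC (hC.2 A B hB hAcard hcolex)
    have hne : B ≠ A := fun h => hAC (h ▸ hB)
    exact mem_erase.2 ⟨hne, mem_filter.2 ⟨mem_powerset.2 hBr, hC.1 B hB⟩⟩
  have h1 : C.card ≤ K.card - 1 := by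
    calc C.card ≤ (K.erase A).card := card_le_card hCsub
    _ = K.card - 1 := card_erase_of_mem hAK
  have h2 : K.card = ∑ r ∈ rs, t.choose r := by
    rw [hK, card_powerset_filter, card_range]
  have h3 : 0 < K.card := card_pos.2 ⟨A, hAK⟩
  omega

/-- Every edge of the colex-initial family lives inside `range (t+1)`. -/
lemma colex_edge_subset {rs : Finset ℕ} {m t : ℕ} {C : Finset (Finset ℕ)}
    (hrs : ∀ r ∈ rs, 2 ≤ r)
    (hm2 : m ≤ (∑ r ∈ rs, t.choose r) + ∑ r ∈ rs, (t - 1).choose (r - 1))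
    (hCm : C.card = m) (hC : IsColexInitial rs C) :
    ∀ e ∈ C, e ⊆ range (t + 1) := by
  classical
  intro e he
  by_contra hcon
  obtain ⟨v, hve, hvt⟩ := not_subset.1 hcon
  have hvt' : t + 1 ≤ v := by simpa using hvt
  set KK := (range (t + 1)).powerset.filter (fun e => e.card ∈ rs) with hKK
  have hsub : insert e KK ⊆ C := by
    intro A hA
    rcases mem_insert.1 hA with rfl | hA
    · exact he
    · have hAsub := mem_powerset.1 (mem_filter.1 hA).1
      have hene : e.Nonempty := ⟨v, hve⟩
      apply hC.2 A e he (mem_filter.1 hA).2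
      apply colexLt_of_forall_lt hene
      intro a ha
      have h1 : a < t + 1 := mem_range.1 (hAsub ha)
      have h2 : v ≤ e.max' hene := e.le_max' v hve
      omega
  have heKK : e ∉ KK := by
    intro h
    have := mem_powerset.1 (mem_filter.1 h).1 hve
    simp at this
    omega
  have hcard : KK.card + 1 ≤ m := by
    have h := card_le_card hsub
    rw [card_insert_of_notMem heKK, hCm] at h
    omega
  have hKKcard : KK.card = ∑ r ∈ rs, (t + 1).choose r := by
    rw [hKK, card_powerset_filter, card_range]
  have hps : (∑ r ∈ rs, t.choose r) + (∑ r ∈ rs, (t - 1).choose (r - 1))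
      ≤ ∑ r ∈ rs, (t + 1).choose r := by
    rw [← Finset.sum_add_distrib]
    apply Finset.sum_le_sum
    intro r hr
    have h2 := hrs r hr
    obtain ⟨k, rfl⟩ : ∃ k, r = k + 1 := ⟨r - 1, by omega⟩
    have hp : (t + 1).choose (k + 1) = t.choose k + t.choose (k + 1) :=
      Nat.choose_succ_succ t k
    have hmono : (t - 1).choose ((k + 1) - 1) ≤ t.choose k := by
      simpa using Nat.choose_le_choose k (show t - 1 ≤ t by omega)
    omega
  omega

/-- Extra edges (containing t) avoid t-1. -/
lemma colex_edge_avoid {rs : Finset ℕ} {m t : ℕ} {C : Finset (Finset ℕ)} (ht : 0 < t)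
    (hrs : ∀ r ∈ rs, 2 ≤ r)
    (hm1 : ∑ r ∈ rs, t.choose r ≤ m)
    (hm2 : m ≤ (∑ r ∈ rs, t.choose r) + ∑ r ∈ rs, (t - 1).choose (r - 1))
    (hCm : C.card = m) (hC : IsColexInitial rs C) :
    ∀ e ∈ C, t ∈ e → t - 1 ∉ e := by
  classical
  intro e he hte
  by_contra ht1e
  have hesub : e ⊆ range (t + 1) := colex_edge_subset hrs hm2 hCm hC e he
  set K := (Finset.range t).powerset.filter (fun e => e.card ∈ rs) with hK
  set Dset := ((range (t - 1)).powerset.filter (fun S => S.card + 1 ∈ rs)).image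
      (insert t) with hD
  have htnot : ∀ S : Finset ℕ, S ⊆ range (t - 1) → t ∉ S := by
    intro S hS h
    have := mem_range.1 (hS h); omega
  have hDmem : ∀ A ∈ Dset, ∃ S, S ⊆ range (t - 1) ∧ S.card + 1 ∈ rs ∧ A = insert t S := by
    intro A hA
    obtain ⟨S, hS, rfl⟩ := mem_image.1 hA
    exact ⟨S, mem_powerset.1 (mem_filter.1 hS).1, (mem_filter.1 hS).2, rfl⟩
  have hsub : insert e (K ∪ Dset) ⊆ C := by
    intro A hA
    rcases mem_insert.1 hA with rfl | hA
    · exact he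
    rcases mem_union.1 hA with hA | hA
    · -- A ∈ K : complete part
      have hAsub := mem_powerset.1 (mem_filter.1 hA).1
      have hene : e.Nonempty := ⟨t, hte⟩
      apply hC.2 A e he (mem_filter.1 hA).2
      apply colexLt_of_forall_lt hene
      intro a ha
      have h1 : a < t := mem_range.1 (hAsub ha)
      have h2 : t ≤ e.max' hene := e.le_max' t hte
      omega
    · -- A ∈ Dset : uses k = t-1
      obtain ⟨S, hSsub, hScard, rfl⟩ := hDmem A hA
      have htS : t ∉ S := htnot S hSsub
      have hcardA : (insert t S).card ∈ rs := by
        rw [card_insert_of_notMem htS]; exact hScard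
      apply hC.2 _ e he hcardA
      refine ⟨t - 1, ht1e, ?_, ?_⟩
      · intro h
        rcases mem_insert.1 h with h | h
        · omega
        · have := mem_range.1 (hSsub h); omega
      · intro j hj
        by_cases hjt : j = t
        · subst hjt; simp [hte]
        · have hjt' : t < j := by omega
          constructor
          · intro h
            rcases mem_insert.1 h with h | h
            · omega
            · have := mem_range.1 (hSsub h); omega
          · intro h
            have := mem_range.1 (hesub h); omega
  have heK : e ∉ K := by
    intro h
    have := mem_range.1 (mem_powerset.1 (mem_filter.1 h).1 hte); omega
  have heD : e ∉ Dset := by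
    intro h
    obtain ⟨S, hSsub, _, hAe⟩ := hDmem e h
    rw [hAe] at ht1e
    rcases mem_insert.1 ht1e with h' | h'
    · omega
    · have := mem_range.1 (hSsub h'); omega
  have hdisj : Disjoint K Dset := by
    rw [Finset.disjoint_left]
    intro A hAK hAD
    obtain ⟨S, _, _, rfl⟩ := hDmem A hAD
    have := mem_range.1 (mem_powerset.1 (mem_filter.1 hAK).1 (mem_insert_self t S))
    omega
  have hKcard : K.card = ∑ r ∈ rs, t.choose r := by
    rw [hK, card_powerset_filter, card_range]
  have hDcard : Dset.card = ∑ r ∈ rs, (t - 1).choose (r - 1) := by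
    rw [hD, card_image_of_injOn, card_powerset_filter' _ _ hrs, card_range]
    intro S1 h1 S2 h2 hins
    have ht1 : t ∉ S1 := htnot S1 (mem_powerset.1 (mem_filter.1 h1).1)
    have ht2 : t ∉ S2 := htnot S2 (mem_powerset.1 (mem_filter.1 h2).1)
    have := congrArg (fun s => Finset.erase s t) hins
    simpa [Finset.erase_insert ht1, Finset.erase_insert ht2] using this
  have hcount : K.card + Dset.card + 1 ≤ m := by
    have h := card_le_card hsub
    rw [card_insert_of_notMem (by simp [heK, heD]), card_union_of_disjoint hdisj, hCm] at h
    omega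
  omega


theorem colex_lagrangian_eq_complete {l : ℕ} (rs : Finset ℕ) (hl : rs.card = l)
    (hrs : ∀ r ∈ rs, 2 ≤ r) (α : ℕ → ℝ) (hα : ∀ r ∈ rs, 0 < α r)
    (m t : ℕ) (ht : 0 < t)
    (hm1 : ∑ r ∈ rs, t.choose r ≤ m)
    (hm2 : m ≤ (∑ r ∈ rs, t.choose r) + ∑ r ∈ rs, (t - 1).choose (r - 1))
    (C : Finset (Finset ℕ)) (hCm : C.card = m) (hC : IsColexInitial rs C) :
    sSup (wLagN α C '' simplexNat)
      = sSup (wLagN α ((Finset.range t).powerset.filter (fun e => e.card ∈ rs))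
          '' simplexNat) := by
  classical
  set K := (Finset.range t).powerset.filter (fun e => e.card ∈ rs) with hKdef
  have hKC : K ⊆ C := complete_subset_colex hm1 hCm hC
  have hCsub := colex_edge_subset hrs hm2 hCm hC
  have hCt := colex_edge_avoid ht hrs hm1 hm2 hCm hC
  have hαC : ∀ e ∈ C, 0 ≤ α e.card := fun e he => (hα _ (hC.1 e he)).le
  have hαK : ∀ e ∈ K, 0 ≤ α e.card := fun e he => (hα _ (mem_filter.1 he).2).le
  have bddC : BddAbove (wLagN α C '' simplexNat) := by
    refine ⟨∑ e ∈ C, α e.card, ?_⟩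
    rintro y ⟨x, hx, rfl⟩
    exact wLagN_le_sum hαC hx
  have bddK : BddAbove (wLagN α K '' simplexNat) := by
    refine ⟨∑ e ∈ K, α e.card, ?_⟩
    rintro y ⟨x, hx, rfl⟩
    exact wLagN_le_sum hαK hx
  apply le_antisymm
  · apply csSup_le (simplex_nonempty.image _)
    rintro y ⟨x, hx, rfl⟩
    set a := x (t - 1) with ha
    set b := x t with hb
    set x' := Function.update (Function.update x t 0) (t - 1) (a + b) with hx'def
    have e1 : x' (t - 1) = a + b := by rw [hx'def]; simp
    have e2 : x' t = 0 := by
      rw [hx'def, Function.update_of_ne (by omega : t ≠ t - 1), Function.update_self]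
    have e3 : ∀ i, i ≠ t - 1 → i ≠ t → x' i = x i := by
      intro i h1 h2
      rw [hx'def, Function.update_of_ne h1, Function.update_of_ne h2]
    obtain ⟨hpos, n, hsum, h0⟩ := hx
    have hx'mem : x' ∈ simplexNat := by
      refine ⟨?_, max n (t + 1), ?_, ?_⟩
      · intro i
        by_cases h1 : i = t - 1
        · rw [h1, e1]; exact add_nonneg (hpos _) (hpos _)
        by_cases h2 : i = t
        · rw [h2, e2]
        · rw [e3 i h1 h2]; exact hpos i
      · set n' := max n (t + 1) with hn'
        have ht1 : t - 1 ∈ range n' := mem_range.2 (by omega)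
        have ht2 : t ∈ (range n').erase (t - 1) :=
          mem_erase.2 ⟨by omega, mem_range.2 (by omega)⟩
        have hxeq : ∑ i ∈ range n', x i = 1 := by
          rw [← hsum]
          refine (Finset.sum_subset (range_subset_range.2 (le_max_left _ _)) ?_).symm
          intro i _ hni
          exact h0 i (by simpa using hni)
        have hsame : ∑ i ∈ ((range n').erase (t - 1)).erase t, x' i
            = ∑ i ∈ ((range n').erase (t - 1)).erase t, x i := by
          apply Finset.sum_congr rfl
          intro i hi
          have h2 := mem_erase.1 hi
          have h1 := mem_erase.1 h2.2
          exact e3 i h1.1 h2.1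
        calc ∑ i ∈ range n', x' i
            = x' (t - 1) + ∑ i ∈ (range n').erase (t - 1), x' i :=
              (Finset.add_sum_erase _ x' ht1).symm
          _ = x' (t - 1) + (x' t + ∑ i ∈ ((range n').erase (t - 1)).erase t, x' i) := by
              rw [Finset.add_sum_erase _ x' ht2]
          _ = a + (b + ∑ i ∈ ((range n').erase (t - 1)).erase t, x i) := by
              rw [e1, e2, hsame]; ring
          _ = ∑ i ∈ range n', x i := by
              rw [← Finset.add_sum_erase _ x ht1, ← Finset.add_sum_erase _ x ht2]
          _ = 1 := hxeq
      · intro i hi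
        have hi' : max n (t + 1) ≤ i := hi
        have h1 : i ≠ t - 1 := by omega
        have h2 : i ≠ t := by omega
        rw [e3 i h1 h2]
        exact h0 i (by omega)
    set D := C \ K with hDdef
    have hDfact : ∀ e ∈ D, t ∈ e ∧ t - 1 ∉ e := by
      intro e heD
      obtain ⟨heC, heK⟩ := mem_sdiff.1 heD
      have hte : t ∈ e := by
        by_contra hte
        apply heK
        rw [hKdef]
        refine mem_filter.2 ⟨mem_powerset.2 ?_, hC.1 e heC⟩
        intro v hv
        have hv1 := mem_range.1 (hCsub e heC hv)
        have hv2 : v ≠ t := fun h => hte (h ▸ hv)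
        exact mem_range.2 (by omega)
      exact ⟨hte, hCt e heC hte⟩
    set K1 := K.filter (fun e => t - 1 ∈ e) with hK1
    have hK1fact : ∀ e ∈ K1, t - 1 ∈ e ∧ t ∉ e := by
      intro e he
      have h1 := mem_filter.1 he
      have hsub := mem_powerset.1 (mem_filter.1 h1.1).1
      exact ⟨h1.2, fun h => by have := mem_range.1 (hsub h); omega⟩
    set Q := ∑ e ∈ K1, α e.card * ∏ v ∈ e.erase (t - 1), x v with hQ
    set R := ∑ e ∈ D, α e.card * ∏ v ∈ e.erase t, x v with hR
    have hCU : K ∪ D = C := by rw [hDdef]; exact Finset.union_sdiff_of_subset hKC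
    have hCsplit : wLagN α C x = wLagN α K x + wLagN α D x := by
      rw [wLagN, wLagN, wLagN, ← hCU, Finset.sum_union (hDdef ▸ Finset.disjoint_sdiff)]
    have hDx : wLagN α D x = b * R := by
      rw [wLagN, hR, Finset.mul_sum]
      apply Finset.sum_congr rfl
      intro e he
      rw [← Finset.mul_prod_erase e x (hDfact e he).1]
      ring
    have hsplitK : ∀ y : ℕ → ℝ, wLagN α K y
        = (∑ e ∈ K1, α e.card * ∏ v ∈ e, y v)
          + ∑ e ∈ K.filter (fun e => ¬ t - 1 ∈ e), α e.card * ∏ v ∈ e, y v := by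
      intro y
      rw [wLagN, hK1, Finset.sum_filter_add_sum_filter_not]
    have hK0eq : ∑ e ∈ K.filter (fun e => ¬ t - 1 ∈ e), α e.card * ∏ v ∈ e, x' v
        = ∑ e ∈ K.filter (fun e => ¬ t - 1 ∈ e), α e.card * ∏ v ∈ e, x v := by
      apply Finset.sum_congr rfl
      intro e he
      have h1 := mem_filter.1 he
      have hsub := mem_powerset.1 (mem_filter.1 h1.1).1
      congr 1
      apply Finset.prod_congr rfl
      intro v hv
      have hv1 : v ≠ t - 1 := fun h => h1.2 (h ▸ hv)
      have hv2 : v ≠ t := by have := mem_range.1 (hsub hv); omega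
      exact e3 v hv1 hv2
    have hK1x : ∀ (y : ℕ → ℝ) (c : ℝ), y (t - 1) = c →
        (∀ v, v ≠ t - 1 → v ≠ t → y v = x v) →
        ∑ e ∈ K1, α e.card * ∏ v ∈ e, y v
          = ∑ e ∈ K1, α e.card * (c * ∏ v ∈ e.erase (t - 1), x v) := by
      intro y c hc hyv
      apply Finset.sum_congr rfl
      intro e he
      obtain ⟨h1, h2⟩ := hK1fact e he
      rw [← Finset.mul_prod_erase e y h1, hc]
      have : ∏ v ∈ e.erase (t - 1), y v = ∏ v ∈ e.erase (t - 1), x v := by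
        apply Finset.prod_congr rfl
        intro v hv
        have hv' := mem_erase.1 hv
        exact hyv v hv'.1 (fun h => h2 (h ▸ hv'.2))
      rw [this]
    have hcomb : ∑ e ∈ K1, α e.card * ((a + b) * ∏ v ∈ e.erase (t - 1), x v)
        = (∑ e ∈ K1, α e.card * (a * ∏ v ∈ e.erase (t - 1), x v)) + b * Q := by
      rw [hQ, Finset.mul_sum, ← Finset.sum_add_distrib]
      apply Finset.sum_congr rfl
      intro e _
      ring
    have hKx' : wLagN α K x' = wLagN α K x + b * Q := by
      rw [hsplitK x', hsplitK x, hK0eq, hK1x x' (a + b) e1 e3,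
          hK1x x a ha.symm (fun v _ _ => rfl), hcomb]
      ring
    have hRQ : R ≤ Q := by
      set φ := fun e : Finset ℕ => insert (t - 1) (e.erase t) with hφ
      have hφfacts : ∀ e ∈ D, φ e ∈ K1 ∧ (φ e).erase (t - 1) = e.erase t
          ∧ (φ e).card = e.card := by
        intro e heD
        obtain ⟨hte, ht1e⟩ := hDfact e heD
        have heC := (mem_sdiff.1 (hDdef ▸ heD)).1
        have hnot : t - 1 ∉ e.erase t := fun h => ht1e (mem_of_mem_erase h)
        have herase : (φ e).erase (t - 1) = e.erase t := Finset.erase_insert hnot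
        have hcard : (φ e).card = e.card := by
          show (insert (t - 1) (e.erase t)).card = e.card
          rw [Finset.card_insert_of_notMem hnot, Finset.card_erase_of_mem hte]
          have : 0 < e.card := card_pos.2 ⟨t, hte⟩
          omega
        have hmem : φ e ∈ K1 := by
          rw [hK1]
          refine mem_filter.2 ⟨?_, mem_insert_self _ _⟩
          rw [hKdef]
          refine mem_filter.2 ⟨mem_powerset.2 ?_, by rw [hcard]; exact hC.1 e heC⟩
          intro v hv
          rcases mem_insert.1 hv with rfl | hv
          · exact mem_range.2 (by omega)
          · have h1 := mem_erase.1 hv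
            have := mem_range.1 (hCsub e heC h1.2)
            exact mem_range.2 (by omega)
        exact ⟨hmem, herase, hcard⟩
      have hinj : ∀ e1 ∈ D, ∀ e2 ∈ D, φ e1 = φ e2 → e1 = e2 := by
        intro e1 h1 e2 h2 heq
        have k1 := (hφfacts e1 h1).2.1
        have k2 := (hφfacts e2 h2).2.1
        have hee : e1.erase t = e2.erase t := by rw [← k1, ← k2, heq]
        have g1 := Finset.insert_erase (hDfact e1 h1).1
        have g2 := Finset.insert_erase (hDfact e2 h2).1
        rw [← g1, ← g2, hee]
      have hRimg : R = ∑ e' ∈ D.image φ, α e'.card * ∏ v ∈ e'.erase (t - 1), x v := by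
        rw [Finset.sum_image hinj, hR]
        apply Finset.sum_congr rfl
        intro e heD
        rw [(hφfacts e heD).2.1, (hφfacts e heD).2.2]
      rw [hRimg, hQ]
      apply Finset.sum_le_sum_of_subset_of_nonneg
      · intro e' he'
        obtain ⟨e, heD, rfl⟩ := mem_image.1 he'
        exact (hφfacts e heD).1
      · intro e' he' _
        have hcard : e'.card ∈ rs := (mem_filter.1 (mem_filter.1 he').1).2
        exact mul_nonneg (hα _ hcard).le (Finset.prod_nonneg fun v _ => hpos v)
    have hbpos : (0 : ℝ) ≤ b := hpos t
    have hkey : wLagN α C x ≤ wLagN α K x' := by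
      rw [hCsplit, hDx, hKx']
      have := mul_le_mul_of_nonneg_left hRQ hbpos
      linarith
    exact le_trans hkey (le_csSup bddK ⟨x', hx'mem, rfl⟩)
  · apply csSup_le (simplex_nonempty.image _)
    rintro y ⟨x, hx, rfl⟩
    have hmono : wLagN α K x ≤ wLagN α C x := by
      apply Finset.sum_le_sum_of_subset_of_nonneg hKC
      intro e he _
      exact mul_nonneg (hαC e he) (Finset.prod_nonneg fun v _ => hx.1 v)
    exact le_trans hmono (le_csSup bddC ⟨x, hx, rfl⟩)
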